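/- Let b ≥ 0, ρ > 0, s* > 0, y* > 0 and 0 ≤ R < 1. Define y_A := ((1 + bρ)/(2 + bρ))·y* (the slow trader's trade facing the fast trader without tax), ỹ := y* − R·s*·ρ/(1 + R + bρ) and y_min := 2·(R/(1−R))·s*·ρ, so that the slow trader's trade under the Tobin tax is y_{A,T} = min(ỹ, y_min). Then y_{A,T} > y_A if and only if (2 + bρ)·R·s*·ρ/(1 + R + bρ) < y* < 2·((2 + bρ)/(1 + bρ))·(R/(1−R))·s*·ρ. -/

import Mathlib

/-- A Tobin tax reduces the deadweight loss (i.e. the slow trader trades more than he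
would facing the untaxed fast trader, `y_{A,T} > y_A`) if and only if
`(2+bρ)·R·s*·ρ/(1+R+bρ) < y* < 2·((2+bρ)/(1+bρ))·(R/(1−R))·s*·ρ`. -/
theorem stmt_16 (b ρ sa ystar R : ℝ)
    (hb : 0 ≤ b) (hρ : 0 < ρ) (hsa : 0 < sa) (hystar : 0 < ystar)
    (hR0 : 0 ≤ R) (hR1 : R < 1)
    (yA ytil ymin yAT : ℝ)
    (hyA : yA = ((1 + b * ρ) / (2 + b * ρ)) * ystar)
    (hytil : ytil = ystar - R * sa * ρ / (1 + R + b * ρ))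
    (hymin : ymin = 2 * (R / (1 - R)) * sa * ρ)
    (hyAT : yAT = min ytil ymin) :
    yA < yAT ↔
      ((2 + b * ρ) * R * sa * ρ / (1 + R + b * ρ) < ystar ∧
        ystar < 2 * ((2 + b * ρ) / (1 + b * ρ)) * (R / (1 - R)) * sa * ρ) := by
  have hbρ : 0 ≤ b * ρ := mul_nonneg hb hρ.le
  have hA : (0:ℝ) < 2 + b * ρ := by linarith
  have hB : (0:ℝ) < 1 + b * ρ := by linarith
  have hC : (0:ℝ) < 1 + R + b * ρ := by linarith
  have hD : (0:ℝ) < 1 - R := by linarith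
  subst hyA hytil hymin hyAT
  rw [lt_min_iff]
  set q := R * sa * ρ / (1 + R + b * ρ) with hq
  set p := R / (1 - R) with hp
  set k := (1 + b * ρ) / (2 + b * ρ) with hk
  set r := (2 + b * ρ) / (1 + b * ρ) with hr
  have hqC : q * (1 + R + b * ρ) = R * sa * ρ := by
    rw [hq]; field_simp
  have hpD : p * (1 - R) = R := by
    rw [hp]; field_simp
  have hkA : k * (2 + b * ρ) = 1 + b * ρ := by
    rw [hk]; field_simp
  have hrB : r * (1 + b * ρ) = 2 + b * ρ := by
    rw [hr]; field_simp
  have huC : (2 + b * ρ) * R * sa * ρ / (1 + R + b * ρ) = (2 + b * ρ) * q := by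
    rw [hq]; field_simp
  have hp0 : 0 ≤ p := div_nonneg hR0 hD.le
  have hq0 : 0 ≤ q := by positivity
  have hr0 : 0 < r := div_pos hA hB
  have hkr : k * r = 1 := by
    rw [hk, hr]; field_simp
  rw [huC]
  constructor
  · rintro ⟨h1, h2⟩
    constructor
    · nlinarith [mul_lt_mul_of_pos_right h1 hA]
    · nlinarith [mul_lt_mul_of_pos_right h2 hr0]
  · rintro ⟨h1, h2⟩
    constructor
    · nlinarith [mul_lt_mul_of_pos_right h1 hB, mul_lt_mul_of_pos_right h1 hA]
    · have := mul_lt_mul_of_pos_right h2 (div_pos hB hA)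
      nlinarith [mul_lt_mul_of_pos_right h2 hB]
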